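/- (Strong law of large numbers for uniformly bounded uncorrelated random variables.) Suppose the random variables X_1, X_2, … are nonnegative, uniformly bounded (0 ≤ X_n ≤ c for some constant c), pairwise uncorrelated (E[X_n X_m] = E[X_n]·E[X_m] for n ≠ m), and dissipative (∑_n E[X_n] = ∞). Then lim_{N→∞} (∑_{n<N} X_n) / (∑_{n<N} E[X_n]) = 1 with probability 1. -/

import Mathlib

open MeasureTheory Filter Finset

set_option maxHeartbeats 2000000 in
private lemma det_ratio (g b : ℕ → ℝ) (ψ : ℕ → ℕ)
    (hg : Monotone g) (hb : Monotone b)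
    (hψ : Tendsto ψ atTop atTop)
    (hbpos : ∀ k, 0 < b (ψ k))
    (h1 : Tendsto (fun k => g (ψ k) / b (ψ k)) atTop (nhds 1))
    (h2 : Tendsto (fun k => b (ψ (k+1)) / b (ψ k)) atTop (nhds 1)) :
    Tendsto (fun N => g N / b N) atTop (nhds 1) := by
  rw [Metric.tendsto_atTop]
  intro ε hε
  set δ : ℝ := min (ε/4) (1/2) with hδdef
  have hδpos : 0 < δ := lt_min (by linarith) (by norm_num)
  have hδ1 : δ ≤ 1/2 := min_le_right _ _
  have hδε : δ ≤ ε/4 := min_le_left _ _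
  obtain ⟨K1, hK1⟩ := Metric.tendsto_atTop.1 h1 δ hδpos
  obtain ⟨K2, hK2⟩ := Metric.tendsto_atTop.1 h2 δ hδpos
  set K : ℕ := max K1 K2 with hKdef
  refine ⟨ψ (K+1), fun N hN => ?_⟩
  obtain ⟨B0, hB0⟩ := eventually_atTop.1 (hψ.eventually_gt_atTop N)
  set B : ℕ := max B0 (K+1) with hBdef
  have hkP : ψ (Nat.findGreatest (fun j => ψ j ≤ N) B) ≤ N :=
    Nat.findGreatest_spec (P := fun j => ψ j ≤ N) (m := K+1) (le_max_right _ _) hN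
  have hkK : K+1 ≤ Nat.findGreatest (fun j => ψ j ≤ N) B :=
    Nat.le_findGreatest (le_max_right _ _) hN
  have hk1 : N < ψ (Nat.findGreatest (fun j => ψ j ≤ N) B + 1) := by
    by_cases h : Nat.findGreatest (fun j => ψ j ≤ N) B + 1 ≤ B
    · exact lt_of_not_ge
        (Nat.findGreatest_is_greatest (P := fun j => ψ j ≤ N) (n := B) (Nat.lt_succ_self _) h)
    · exact hB0 _ (by omega)
  set k : ℕ := Nat.findGreatest (fun j => ψ j ≤ N) B with hkdef
  clear_value δ K B k
  have hbk : 0 < b (ψ k) := hbpos k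
  have hbk1 : 0 < b (ψ (k+1)) := hbpos (k+1)
  have hbN : 0 < b N := lt_of_lt_of_le hbk (hb hkP)
  have hbNle : b N ≤ b (ψ (k+1)) := hb hk1.le
  have hbNge : b (ψ k) ≤ b N := hb hkP
  have e1 : g (ψ k) = (g (ψ k) / b (ψ k)) * b (ψ k) := (div_mul_cancel₀ _ hbk.ne').symm
  have e2 : g (ψ (k+1)) = (g (ψ (k+1)) / b (ψ (k+1))) * b (ψ (k+1)) :=
    (div_mul_cancel₀ _ hbk1.ne').symm
  have e3 : b (ψ (k+1)) = (b (ψ (k+1)) / b (ψ k)) * b (ψ k) := (div_mul_cancel₀ _ hbk.ne').symm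
  have h1k := hK1 k (by omega)
  have h1k1 := hK1 (k+1) (by omega)
  have h2k := hK2 k (by omega)
  rw [Real.dist_eq, abs_lt] at h1k h1k1 h2k
  have hgkl : (1-δ) * b (ψ k) < g (ψ k) := by nlinarith [h1k.1, hbk]
  have hgku : g (ψ (k+1)) < (1+δ) * b (ψ (k+1)) := by nlinarith [h1k1.2, hbk1]
  have hbb : b (ψ (k+1)) < (1+δ) * b (ψ k) := by nlinarith [h2k.2, hbk]
  have hgN1 : g N ≤ g (ψ (k+1)) := hg hk1.le
  have hgN2 : g (ψ k) ≤ g N := hg hkP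
  have hb2 : b N < (1+δ) * b (ψ k) := lt_of_le_of_lt hbNle hbb
  clear hkdef hBdef hKdef hδdef hB0 hK1 hK2 h1 h2 hψ hg hb hbpos hN
  have key_up : g N < (1+ε) * b N := by
    have t1 : g N < (1+δ) * b (ψ (k+1)) := lt_of_le_of_lt hgN1 hgku
    have t2 : (1+δ) * b (ψ (k+1)) < (1+δ) * ((1+δ) * b (ψ k)) :=
      mul_lt_mul_of_pos_left hbb (by linarith)
    have t3 : (1+δ) * ((1+δ) * b (ψ k)) ≤ (1+δ) * ((1+δ) * b N) :=
      mul_le_mul_of_nonneg_left (mul_le_mul_of_nonneg_left hbNge (by linarith)) (by linarith)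
    have t4 : (1+δ) * ((1+δ) * b N) ≤ (1+ε) * b N := by
      nlinarith [mul_le_mul_of_nonneg_right hδε hbN.le,
        mul_le_mul_of_nonneg_right hδ1 (mul_nonneg hδpos.le hbN.le), hbN]
    linarith
  have key_low : (1-ε) * b N < g N := by
    rcases le_or_gt ε 1 with hε1 | hε1
    · have t1 : (1-ε) * b N ≤ (1-ε) * ((1+δ) * b (ψ k)) :=
        mul_le_mul_of_nonneg_left hb2.le (by linarith)
      have t2 : (1-ε) * ((1+δ) * b (ψ k)) ≤ (1-δ) * b (ψ k) := by
        nlinarith [mul_le_mul_of_nonneg_right hδε hbk.le,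
          mul_nonneg (mul_nonneg hε.le hδpos.le) hbk.le, mul_pos hε hbk]
      linarith
    · have hpos : 0 < g N := by nlinarith [hbk]
      have : (1-ε) * b N < 0 := mul_neg_of_neg_of_pos (by linarith) hbN
      linarith
  rw [Real.dist_eq, abs_lt]
  constructor
  · have := (lt_div_iff₀ hbN).2 key_low; linarith
  · have := (div_lt_iff₀ hbN).2 key_up; linarith

set_option maxHeartbeats 2000000 in
/-- **Strong law of large numbers for uniformly bounded, pairwise uncorrelated,
nonnegative random variables.**  If `0 ≤ X n ≤ c`, the `X n` are pairwise uncorrelated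
and `∑ E[X n] = ∞`, then `(∑_{n<N} X n) / (∑_{n<N} E[X n]) → 1` almost surely. -/
theorem stmt11
    {Ω : Type*} [MeasurableSpace Ω] (P : Measure Ω) [IsProbabilityMeasure P]
    (c : ℝ) (X : ℕ → Ω → ℝ) (hX_meas : ∀ n, Measurable (X n))
    (hX_nonneg : ∀ n ω, 0 ≤ X n ω) (hX_bdd : ∀ n ω, X n ω ≤ c)
    (hX_uncorr : ∀ n m, n ≠ m →
      ∫ ω, X n ω * X m ω ∂P = (∫ ω, X n ω ∂P) * (∫ ω, X m ω ∂P))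
    (hX_diss : Tendsto (fun N : ℕ => ∑ n ∈ Finset.range N, ∫ ω, X n ω ∂P) atTop atTop) :
    ∀ᵐ ω ∂P,
      Tendsto (fun N : ℕ =>
          (∑ n ∈ Finset.range N, X n ω) / (∑ n ∈ Finset.range N, ∫ ω', X n ω' ∂P))
        atTop (nhds 1) := by
  classical
  have hXint : ∀ n, Integrable (X n) P := fun n =>
    (integrable_const c).mono' (hX_meas n).aestronglyMeasurable
      (ae_of_all _ fun ω => by
        rw [Real.norm_eq_abs, abs_of_nonneg (hX_nonneg n ω)]; exact hX_bdd n ω)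
  have hXXint : ∀ n k, Integrable (fun ω => X n ω * X k ω) P := fun n k =>
    (integrable_const (c*c)).mono' ((hX_meas n).mul (hX_meas k)).aestronglyMeasurable
      (ae_of_all _ fun ω => by
        rw [Real.norm_eq_abs, abs_of_nonneg (mul_nonneg (hX_nonneg n ω) (hX_nonneg k ω))]
        exact mul_le_mul (hX_bdd n ω) (hX_bdd k ω) (hX_nonneg k ω)
          (le_trans (hX_nonneg n ω) (hX_bdd n ω)))
  set μ : ℕ → ℝ := fun n => ∫ ω, X n ω ∂P with hμdef
  have hμ0 : ∀ n, 0 ≤ μ n := fun n => integral_nonneg (fun ω => hX_nonneg n ω)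
  have hμc : ∀ n, μ n ≤ c := fun n => by
    calc μ n ≤ ∫ _ω, c ∂P := integral_mono (hXint n) (integrable_const c) (fun ω => hX_bdd n ω)
    _ = c := by simp
  have hc0 : 0 ≤ c := le_trans (hμ0 0) (hμc 0)
  set m : ℕ → ℝ := fun N => ∑ n ∈ Finset.range N, μ n with hmdef
  have hm_eq : ∀ N, (∑ n ∈ Finset.range N, μ n) = m N := fun N => rfl
  have hm_mono : Monotone m := monotone_nat_of_le_succ (fun N => by
    rw [hmdef]; simp only [Finset.sum_range_succ]; linarith [hμ0 N])
  -- centered variables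
  set Y : ℕ → Ω → ℝ := fun n ω => X n ω - μ n with hYdef
  have hYYint : ∀ n k, Integrable (fun ω => Y n ω * Y k ω) P := by
    intro n k
    have h : (fun ω => Y n ω * Y k ω)
        = fun ω => (X n ω * X k ω - μ n * X k ω) - (μ k * X n ω - μ n * μ k) := by
      funext ω; rw [hYdef]; ring
    rw [h]
    exact ((hXXint n k).sub ((hXint k).const_mul (μ n))).sub
      (((hXint n).const_mul (μ k)).sub (integrable_const _))
  have hYY_int_eq : ∀ n k, ∫ ω, Y n ω * Y k ω ∂P = (∫ ω, X n ω * X k ω ∂P) - μ n * μ k := by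
    intro n k
    have h : (fun ω => Y n ω * Y k ω)
        = fun ω => (X n ω * X k ω - μ n * X k ω) - (μ k * X n ω - μ n * μ k) := by
      funext ω; rw [hYdef]; ring
    have iA : Integrable (fun ω => X n ω * X k ω - μ n * X k ω) P :=
      (hXXint n k).sub ((hXint k).const_mul (μ n))
    have iB : Integrable (fun ω => μ k * X n ω - μ n * μ k) P :=
      ((hXint n).const_mul (μ k)).sub (integrable_const _)
    have iC : Integrable (fun ω => μ n * X k ω) P := (hXint k).const_mul (μ n)
    have iD : Integrable (fun ω => μ k * X n ω) P := (hXint n).const_mul (μ k)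
    rw [h, integral_sub iA iB, integral_sub (hXXint n k) iC,
        integral_sub iD (integrable_const _),
        integral_const_mul, integral_const_mul, integral_const]
    simp only [probReal_univ, measure_univ, ENNReal.toReal_one, one_smul]
    rw [hμdef]; ring
  have hTint : ∀ N, Integrable (fun ω => (∑ n ∈ Finset.range N, Y n ω)^2) P := by
    intro N
    have h : (fun ω => (∑ n ∈ Finset.range N, Y n ω)^2)
        = fun ω => ∑ n ∈ Finset.range N, ∑ k ∈ Finset.range N, Y n ω * Y k ω :=
      funext fun ω => by rw [sq, Finset.sum_mul_sum]
    rw [h]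
    exact integrable_finset_sum _ (fun n _ => integrable_finset_sum _ (fun k _ => hYYint n k))
  have hvar : ∀ N, ∫ ω, (∑ n ∈ Finset.range N, Y n ω)^2 ∂P ≤ c * m N := by
    intro N
    have h : (fun ω => (∑ n ∈ Finset.range N, Y n ω)^2)
        = fun ω => ∑ n ∈ Finset.range N, ∑ k ∈ Finset.range N, Y n ω * Y k ω :=
      funext fun ω => by rw [sq, Finset.sum_mul_sum]
    rw [h, integral_finset_sum _ (fun n _ => integrable_finset_sum _ (fun k _ => hYYint n k))]
    have step : ∀ n ∈ Finset.range N,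
        ∫ ω, ∑ k ∈ Finset.range N, Y n ω * Y k ω ∂P
          = ∑ k ∈ Finset.range N, ∫ ω, Y n ω * Y k ω ∂P :=
      fun n _ => integral_finset_sum _ (fun k _ => hYYint n k)
    rw [Finset.sum_congr rfl step]
    have diag : ∀ n ∈ Finset.range N,
        ∑ k ∈ Finset.range N, ∫ ω, Y n ω * Y k ω ∂P = ∫ ω, Y n ω * Y n ω ∂P := by
      intro n hn
      refine Finset.sum_eq_single_of_mem n hn (fun k _ hk => ?_)
      rw [hYY_int_eq, hX_uncorr n k (Ne.symm hk)]
      rw [hμdef]; ring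
    rw [Finset.sum_congr rfl diag]
    have diagle : ∀ n, ∫ ω, Y n ω * Y n ω ∂P ≤ c * μ n := by
      intro n
      rw [hYY_int_eq]
      have h1 : ∫ ω, X n ω * X n ω ∂P ≤ c * μ n := by
        have h2 := integral_mono (hXXint n n) ((hXint n).const_mul c)
          (fun ω => mul_le_mul_of_nonneg_right (hX_bdd n ω) (hX_nonneg n ω))
        rwa [integral_const_mul] at h2
      nlinarith [mul_self_nonneg (μ n)]
    calc ∑ n ∈ Finset.range N, ∫ ω, Y n ω * Y n ω ∂P
        ≤ ∑ n ∈ Finset.range N, c * μ n := Finset.sum_le_sum (fun n _ => diagle n)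
      _ = c * m N := by rw [hmdef, Finset.mul_sum]
  have hcheb : ∀ N (a : ℝ), 0 < a →
      (P {ω | a^2 ≤ (∑ n ∈ Finset.range N, Y n ω)^2}).toReal ≤ c * m N / a^2 := by
    intro N a ha
    have hM := mul_meas_ge_le_integral_of_nonneg (μ := P)
      (ae_of_all _ fun ω => sq_nonneg (∑ n ∈ Finset.range N, Y n ω)) (hTint N) (a^2)
    have h2 := le_trans hM (hvar N)
    rw [le_div_iff₀ (by positivity)]
    rw [measureReal_def] at h2
    linarith
  -- the subsequence
  have hφex : ∀ k : ℕ, ∃ N, (k:ℝ)^2 ≤ m N :=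
    fun k => (hX_diss.eventually_ge_atTop ((k:ℝ)^2)).exists
  set φ : ℕ → ℕ := fun k => Nat.find (hφex k) with hφdef
  have hφ_spec : ∀ k : ℕ, ((k:ℝ))^2 ≤ m (φ k) := fun k => Nat.find_spec (hφex k)
  have hφ_mono : Monotone φ := by
    intro k l hkl
    exact Nat.find_mono (fun N hN =>
      le_trans (pow_le_pow_left₀ (Nat.cast_nonneg k) (Nat.cast_le.2 hkl) 2) hN)
  have hm0 : m 0 = 0 := by rw [hmdef]; simp
  have hφ_pos : ∀ k, 1 ≤ k → 1 ≤ φ k := by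
    intro k hk
    rcases Nat.eq_zero_or_pos (φ k) with h | h
    · exfalso
      have hs := hφ_spec k
      rw [h, hm0] at hs
      have h1 : (1:ℝ) ≤ (k:ℝ) := by exact_mod_cast hk
      nlinarith
    · exact h
  have hφ_upper : ∀ k, 1 ≤ k → m (φ k) < (k:ℝ)^2 + c := by
    intro k hk
    have h1 := hφ_pos k hk
    have h3 : ¬ ((k:ℝ)^2 ≤ m (φ k - 1)) := Nat.find_min (hφex k)
      (by have he : φ k = Nat.find (hφex k) := rfl; omega)
    push_neg at h3
    have h4 : m ((φ k - 1) + 1) = m (φ k - 1) + μ (φ k - 1) := by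
      rw [hmdef]; simp [Finset.sum_range_succ]
    have h5 : (φ k - 1) + 1 = φ k := by omega
    rw [h5] at h4
    rw [h4]
    linarith [hμc (φ k - 1)]
  have hφ_tendsto : Tendsto φ atTop atTop := by
    rw [tendsto_atTop_atTop]
    intro N
    obtain ⟨K, hK⟩ := exists_nat_gt (m N)
    refine ⟨K, fun k hk => ?_⟩
    by_contra h
    push_neg at h
    have h1 : m (φ k) ≤ m N := hm_mono (by omega)
    have h2 : (k:ℝ)^2 ≤ m N := le_trans (hφ_spec k) h1
    have hKk : (K:ℝ) ≤ (k:ℝ) := Nat.cast_le.2 hk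
    have h3 : (k:ℝ) ≤ (k:ℝ)^2 := by
      have := Nat.le_self_pow (two_ne_zero) k
      exact_mod_cast this
    linarith
  have hmψ : ∀ k:ℕ, ((k:ℝ)+1)^2 ≤ m (φ (k+1)) := by
    intro k
    have := hφ_spec (k+1)
    push_cast at this
    linarith
  have hmψpos : ∀ k:ℕ, 0 < m (φ (k+1)) :=
    fun k => lt_of_lt_of_le (by positivity) (hmψ k)
  -- Borel-Cantelli events
  set A : ℕ → ℕ → Set Ω := fun j k =>
    {ω | ((1/((j:ℝ)+1)) * m (φ (k+1)))^2 ≤ (∑ n ∈ Finset.range (φ (k+1)), Y n ω)^2} with hAdef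
  have hPA : ∀ j k, (P (A j k)).toReal ≤ (c * ((j:ℝ)+1)^2) * (1/((k:ℝ)+1)^2) := by
    intro j k
    have hδj : 0 < 1/((j:ℝ)+1) := by positivity
    have ha : 0 < (1/((j:ℝ)+1)) * m (φ (k+1)) := mul_pos hδj (hmψpos k)
    have h1 := hcheb (φ (k+1)) _ ha
    have h2 : c * m (φ (k+1)) / ((1/((j:ℝ)+1)) * m (φ (k+1)))^2
        = (c * ((j:ℝ)+1)^2) * (1 / m (φ (k+1))) := by
      have hm' : m (φ (k+1)) ≠ 0 := (hmψpos k).ne'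
      have hj' : ((j:ℝ)+1) ≠ 0 := by positivity
      field_simp
    rw [h2] at h1
    refine le_trans h1 ?_
    have h3 : 1 / m (φ (k+1)) ≤ 1/((k:ℝ)+1)^2 :=
      one_div_le_one_div_of_le (by positivity) (hmψ k)
    exact mul_le_mul_of_nonneg_left h3 (mul_nonneg hc0 (sq_nonneg _))
  have hsum : ∀ j:ℕ, Summable (fun k:ℕ => (c * ((j:ℝ)+1)^2) * (1/((k:ℝ)+1)^2)) := by
    intro j
    apply Summable.mul_left
    have h := (summable_nat_add_iff 1).mpr <| Real.summable_one_div_nat_pow.mpr one_lt_two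
    exact h.congr (fun k => by push_cast; ring)
  have hBC : ∀ j:ℕ, ∀ᵐ ω ∂P, ∀ᶠ k in atTop, ω ∉ A j k := by
    intro j
    apply ae_eventually_notMem
    have hb : ∀ k, P (A j k) ≤ ENNReal.ofReal ((c * ((j:ℝ)+1)^2) * (1/((k:ℝ)+1)^2)) := by
      intro k
      rw [← ENNReal.ofReal_toReal (measure_ne_top P (A j k))]
      exact ENNReal.ofReal_le_ofReal (hPA j k)
    have h1 := ENNReal.tsum_le_tsum hb
    rw [← ENNReal.ofReal_tsum_of_nonneg
      (fun k => mul_nonneg (mul_nonneg hc0 (sq_nonneg _)) (by positivity)) (hsum j)] at h1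
    exact ne_top_of_le_ne_top ENNReal.ofReal_ne_top h1
  have hae : ∀ᵐ ω ∂P, ∀ j : ℕ, ∀ᶠ k in atTop, ω ∉ A j k := ae_all_iff.2 hBC
  filter_upwards [hae] with ω hω
  have hSY : ∀ N, (∑ n ∈ Finset.range N, X n ω) - m N = ∑ n ∈ Finset.range N, Y n ω := by
    intro N
    rw [hmdef, hYdef, ← Finset.sum_sub_distrib]
  have hg_mono : Monotone (fun N => ∑ n ∈ Finset.range N, X n ω) :=
    monotone_nat_of_le_succ (fun N => by
      simp only [Finset.sum_range_succ]; linarith [hX_nonneg N ω])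
  have h1 : Tendsto (fun k => (∑ n ∈ Finset.range (φ (k+1)), X n ω) / m (φ (k+1)))
      atTop (nhds 1) := by
    rw [Metric.tendsto_atTop]
    intro ε hε
    obtain ⟨j, hj⟩ := exists_nat_one_div_lt hε
    obtain ⟨K, hK⟩ := eventually_atTop.1 (hω j)
    refine ⟨K, fun k hk => ?_⟩
    have hA := hK k hk
    rw [hAdef] at hA
    simp only [Set.mem_setOf_eq, not_le] at hA
    have hmpos := hmψpos k
    have hδj : 0 < 1/((j:ℝ)+1) := by positivity
    have habs : |(∑ n ∈ Finset.range (φ (k+1)), X n ω) - m (φ (k+1))|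
        < (1/((j:ℝ)+1)) * m (φ (k+1)) := by
      have h2 : ((∑ n ∈ Finset.range (φ (k+1)), X n ω) - m (φ (k+1)))^2
          < ((1/((j:ℝ)+1)) * m (φ (k+1)))^2 := by
        rw [hSY]; exact hA
      nlinarith [abs_nonneg ((∑ n ∈ Finset.range (φ (k+1)), X n ω) - m (φ (k+1))),
        sq_abs ((∑ n ∈ Finset.range (φ (k+1)), X n ω) - m (φ (k+1))),
        mul_pos hδj hmpos]
    rw [Real.dist_eq]
    have heq : (∑ n ∈ Finset.range (φ (k+1)), X n ω) / m (φ (k+1)) - 1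
        = ((∑ n ∈ Finset.range (φ (k+1)), X n ω) - m (φ (k+1))) / m (φ (k+1)) := by
      field_simp
    rw [heq, abs_div, abs_of_pos hmpos, div_lt_iff₀ hmpos]
    calc |(∑ n ∈ Finset.range (φ (k+1)), X n ω) - m (φ (k+1))|
        < (1/((j:ℝ)+1)) * m (φ (k+1)) := habs
      _ < ε * m (φ (k+1)) := mul_lt_mul_of_pos_right hj hmpos
  have h2 : Tendsto (fun k => m (φ (k+1+1)) / m (φ (k+1))) atTop (nhds 1) := by
    have hupper : ∀ k:ℕ, m (φ (k+1+1)) / m (φ (k+1)) ≤ (((k:ℝ)+2)^2 + c)/(((k:ℝ)+1)^2) := by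
      intro k
      have hu := hφ_upper (k+2) (by omega)
      push_cast at hu
      have hl := hmψ k
      refine div_le_div₀ (by positivity) ?_ (by positivity) hl
      have : (k:ℕ)+1+1 = k+2 := by omega
      rw [this]
      linarith
    have hlower : ∀ k:ℕ, (1:ℝ) ≤ m (φ (k+1+1)) / m (φ (k+1)) := by
      intro k
      rw [le_div_iff₀ (hmψpos k), one_mul]
      exact hm_mono (hφ_mono (by omega))
    have h0 : Tendsto (fun k:ℕ => 1/((k:ℝ)+1)) atTop (nhds 0) :=
      tendsto_one_div_add_atTop_nhds_zero_nat
    have hlim0 : Tendsto (fun k:ℕ => (1 + 1/((k:ℝ)+1))^2 + c * (1/((k:ℝ)+1))^2)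
        atTop (nhds ((1+0)^2 + c * 0^2)) :=
      ((tendsto_const_nhds.add h0).pow 2).add (tendsto_const_nhds.mul (h0.pow 2))
    have hlim : Tendsto (fun k:ℕ => (((k:ℝ)+2)^2 + c)/(((k:ℝ)+1)^2)) atTop (nhds 1) := by
      have h1' : ((1:ℝ)+0)^2 + c * 0^2 = 1 := by ring
      rw [h1'] at hlim0
      refine hlim0.congr (fun k => ?_)
      have hk1 : ((k:ℝ)+1) ≠ 0 := by positivity
      field_simp
      ring
    exact tendsto_of_tendsto_of_tendsto_of_le_of_le tendsto_const_nhds hlim hlower hupper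
  exact det_ratio (fun N => ∑ n ∈ Finset.range N, X n ω) m (fun k => φ (k+1))
    hg_mono hm_mono (hφ_tendsto.comp (tendsto_add_atTop_nat 1)) hmψpos h1 h2
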